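/- Let c0 = 0.558, let L ∈ ℕ with L ≥ 1, and let k > 0 be a real number with log k ≤ (L+1)/c0. Then for every real λ ≥ 6.5·L: −(e^{λ}/(2k))·(L/(e·λ))^L + L(L+1)/(2λ) < 0. -/

import Mathlib

theorem stmt_9 (L : ℕ) (hL : 1 ≤ L) (k : ℝ) (hk : 0 < k)
    (hlogk : Real.log k ≤ ((L : ℝ) + 1) / 0.558) :
    ∀ x : ℝ, 6.5 * L ≤ x →
      -(Real.exp x / (2 * k)) * ((L : ℝ) / (Real.exp 1 * x)) ^ L
          + (L : ℝ) * ((L : ℝ) + 1) / (2 * x) < 0 := by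
  intro x hx
  obtain ⟨a, ha, ha1⟩ : ∃ a : ℝ, (L : ℝ) = a ∧ 1 ≤ a := ⟨(L : ℝ), rfl, by exact_mod_cast hL⟩
  rw [ha] at hlogk hx ⊢
  have ha0 : 0 < a := lt_of_lt_of_le one_pos ha1
  have hx0 : 0 < x := lt_of_lt_of_le (by nlinarith) hx
  have hq : 0 < a / (Real.exp 1 * x) := by positivity
  -- abbreviations
  obtain ⟨y, hy1, hxy⟩ : ∃ y : ℝ, 1 ≤ y ∧ x = 6.5 * a * y :=
    ⟨x / (6.5 * a), (one_le_div (by positivity)).mpr hx, by field_simp⟩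
  have hw : Real.log x ≤ y - 1 + Real.log 6.5 + Real.log a := by
    have h1 : Real.log (x / (6.5 * a)) ≤ x / (6.5 * a) - 1 :=
      Real.log_le_sub_one_of_pos (by positivity)
    have h2 : Real.log (x / (6.5 * a)) = Real.log x - (Real.log 6.5 + Real.log a) := by
      rw [Real.log_div hx0.ne' (by positivity), Real.log_mul (by norm_num) ha0.ne']
    rw [h2] at h1
    have h3 : x / (6.5 * a) = y := by rw [hxy]; field_simp
    rw [h3] at h1
    linarith
  have hla : 0 ≤ Real.log a := Real.log_nonneg ha1
  have hl65l : 0 ≤ Real.log 6.5 := Real.log_nonneg (by norm_num)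
  have hl65u : Real.log 6.5 ≤ 2 := by
    rw [Real.log_le_iff_le_exp (by norm_num)]
    have h1 : Real.exp 2 = Real.exp 1 * Real.exp 1 := by
      rw [← Real.exp_add]; norm_num
    nlinarith [Real.exp_one_gt_d9]
  have hlL1 : Real.log (a + 1) ≤ a := by
    have := Real.log_le_sub_one_of_pos (show (0:ℝ) < a + 1 by linarith)
    linarith
  -- the main comparison
  have hlogq : Real.log (a / (Real.exp 1 * x)) = Real.log a - (1 + Real.log x) := by
    rw [Real.log_div ha0.ne' (by positivity), Real.log_mul (Real.exp_pos 1).ne' hx0.ne',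
      Real.log_exp]
  have hlogC : Real.log (a * (a + 1) / (2 * x))
      = Real.log a + Real.log (a + 1) - (Real.log 2 + Real.log x) := by
    rw [Real.log_div (by positivity) (by positivity), Real.log_mul ha0.ne' (by positivity),
      Real.log_mul (by norm_num) hx0.ne']
  have hlog : Real.log (a * (a + 1) / (2 * x))
      < x + a * Real.log (a / (Real.exp 1 * x)) - Real.log k - Real.log 2 := by
    rw [hlogC, hlogq]
    have hmul : (a - 1) * Real.log x ≤ (a - 1) * (y - 1 + Real.log 6.5 + Real.log a) :=
      mul_le_mul_of_nonneg_left hw (by linarith)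
    have hF2 : 0 ≤ (y - 1) * (5.5 * a + 1) :=
      mul_nonneg (by linarith) (by linarith)
    have hF3 : 0 ≤ (a - 1) * (2 - Real.log 6.5) :=
      mul_nonneg (by linarith) (by linarith)
    have hk' : Real.log k ≤ 1.793 * (a + 1) := by
      have h4 : (a + 1) / 0.558 ≤ 1.793 * (a + 1) := by
        rw [div_le_iff₀ (by norm_num)]
        nlinarith
      linarith
    nlinarith [hmul, hF2, hF3, hk']
  have hpow : (a / (Real.exp 1 * x)) ^ L
      = Real.exp (a * Real.log (a / (Real.exp 1 * x))) := by
    have hq' : (0:ℝ) < (L : ℝ) / (Real.exp 1 * x) := by rw [ha]; exact hq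
    rw [← ha, Real.exp_nat_mul, Real.exp_log hq']
  have hT : Real.exp (x + a * Real.log (a / (Real.exp 1 * x)) - Real.log k - Real.log 2)
      = Real.exp x / (2 * k) * (a / (Real.exp 1 * x)) ^ L := by
    rw [hpow, Real.exp_sub, Real.exp_sub, Real.exp_add, Real.exp_log hk,
      Real.exp_log (by norm_num : (0:ℝ) < 2)]
    field_simp
  have hmain : a * (a + 1) / (2 * x) < Real.exp x / (2 * k) * (a / (Real.exp 1 * x)) ^ L := by
    calc a * (a + 1) / (2 * x)
        = Real.exp (Real.log (a * (a + 1) / (2 * x))) := (Real.exp_log (by positivity)).symm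
      _ < Real.exp (x + a * Real.log (a / (Real.exp 1 * x)) - Real.log k - Real.log 2) :=
          Real.exp_lt_exp.mpr hlog
      _ = _ := hT
  linarith
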